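/- Let (X, 𝔅, μ, T) be a weakly mixing measure-preserving system (i.e., the product system (X × X, μ × μ, T × T) is ergodic) and let f ∈ L²(X, μ) with ∫_X f dμ = 0. Then for every ε > 0 there exists J₀ ∈ ℕ such that for every J ≥ J₀ and every sequence (b_j)_{j≥1} ∈ {0,1}^ℕ: ‖ (1/J) Σ_{j=1}^{J} b_j · (f ∘ T^j) ‖_{L²(X,μ)} < ε. -/

import Mathlib

open MeasureTheory Filter Finset Function
open scoped Topology ENNReal RealInnerProductSpace

set_option synthInstance.maxHeartbeats 1000000
noncomputable section

variable {α : Type*} [MeasurableSpace α] {μ : Measure α}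

/-- The Koopman operator on `L²` as a linear isometry. -/
noncomputable def koopman (μ : Measure α) (T : α → α) (hT : MeasurePreserving T μ μ) :
    Lp ℝ 2 μ →ₗᵢ[ℝ] Lp ℝ 2 μ where
  toLinearMap :=
  { toFun := Lp.compMeasurePreserving T hT
    map_add' := map_add _
    map_smul' := fun c g => Lp.ext <| by
      filter_upwards [Lp.coeFn_compMeasurePreserving (c • g) hT,
        hT.quasiMeasurePreserving.ae_eq_comp (Lp.coeFn_smul c g),
        Lp.coeFn_smul c (Lp.compMeasurePreserving T hT g),
        Lp.coeFn_compMeasurePreserving g hT] with x h1 h2 h3 h5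
      simp only [RingHom.id_apply]
      rw [h1, h2, h3]
      simp only [Pi.smul_apply, Function.comp_apply, h5, smul_eq_mul] }
  norm_map' := fun g => Lp.norm_compMeasurePreserving g hT

@[simp] lemma koopman_apply (T : α → α) (hT : MeasurePreserving T μ μ) (g : Lp ℝ 2 μ) :
    koopman μ T hT g = Lp.compMeasurePreserving T hT g := rfl

lemma koopman_iterate_coeFn (T : α → α) (hT : MeasurePreserving T μ μ) (n : ℕ)
    (g : Lp ℝ 2 μ) :
    (⇑(koopman μ T hT))^[n] g =ᵐ[μ] fun x => g (T^[n] x) := by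
  induction n with
  | zero => simp only [Function.iterate_zero, id_eq]; exact EventuallyEq.rfl
  | succ n ih =>
    rw [Function.iterate_succ_apply']
    refine (Lp.coeFn_compMeasurePreserving _ hT).trans ?_
    refine (hT.quasiMeasurePreserving.ae_eq_comp ih).trans ?_
    filter_upwards with x
    simp [Function.comp, Function.iterate_succ_apply]

lemma koopman_inner_iterate (T : α → α) (hT : MeasurePreserving T μ μ) (k : ℕ)
    (u v : Lp ℝ 2 μ) :
    ⟪(⇑(koopman μ T hT))^[k] u, (⇑(koopman μ T hT))^[k] v⟫ = ⟪u, v⟫ := by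
  induction k with
  | zero => simp
  | succ k ih =>
    rw [Function.iterate_succ_apply', Function.iterate_succ_apply',
      LinearIsometry.inner_map_map]
    exact ih

lemma koopman_inner_iterate_sub (T : α → α) (hT : MeasurePreserving T μ μ) {j k : ℕ}
    (hkj : k ≤ j) (u v : Lp ℝ 2 μ) :
    ⟪(⇑(koopman μ T hT))^[j] u, (⇑(koopman μ T hT))^[k] v⟫
      = ⟪(⇑(koopman μ T hT))^[j - k] u, v⟫ := by
  conv_lhs => rw [show j = k + (j - k) by omega, Function.iterate_add_apply]
  exact koopman_inner_iterate T hT k _ v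
lemma inner_koopman_toLp (T : α → α) (hT : MeasurePreserving T μ μ) (n : ℕ)
    {g : α → ℝ} (hg : MemLp g 2 μ) :
    ⟪(⇑(koopman μ T hT))^[n] (hg.toLp g), hg.toLp g⟫ = ∫ x, g (T^[n] x) * g x ∂μ := by
  rw [MeasureTheory.L2.inner_def]
  refine integral_congr_ae ?_
  filter_upwards [koopman_iterate_coeFn T hT n (hg.toLp g), hg.coeFn_toLp,
    (hT.iterate n).quasiMeasurePreserving.ae_eq_comp hg.coeFn_toLp] with x h1 h2 h3
  simp only [RCLike.inner_apply, starRingEnd_apply, star_trivial]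
  rw [h1, h2]
  have : ((hg.toLp g : α → ℝ) ∘ T^[n]) x = (g ∘ T^[n]) x := h3
  simp only [Function.comp_apply] at this
  rw [this]
  ring

lemma corr_sq_cesaro {X : Type*} [MeasurableSpace X] (μ : Measure X) [IsProbabilityMeasure μ]
    (T : X → X) (hT : MeasurePreserving T μ μ)
    (hwm : Ergodic (fun p : X × X => (T p.1, T p.2)) (μ.prod μ))
    (f : X → ℝ) (hf : MemLp f 2 μ) (hint : ∫ x, f x ∂μ = 0) :
    Tendsto (fun N : ℕ => (N : ℝ)⁻¹ * ∑ n ∈ Finset.range N, (∫ x, f (T^[n] x) * f x ∂μ) ^ 2)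
      atTop (𝓝 0) := by
  set ν : Measure (X × X) := μ.prod μ with hν
  set S : X × X → X × X := fun p => (T p.1, T p.2) with hSdef
  have hS : MeasurePreserving S ν ν := (hT.prod hT)
  have hSiter : ∀ (n : ℕ) (p : X × X), S^[n] p = (T^[n] p.1, T^[n] p.2) := by
    intro n
    induction n with
    | zero => intro p; simp
    | succ n ih =>
      intro p
      rw [Function.iterate_succ_apply, ih, Function.iterate_succ_apply,
        Function.iterate_succ_apply]
  set F : X × X → ℝ := fun p => f p.1 * f p.2 with hFdef
  have hmf1 : AEStronglyMeasurable (fun p : X × X => f p.1) ν :=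
    hf.aestronglyMeasurable.comp_quasiMeasurePreserving
      (Measure.quasiMeasurePreserving_fst (μ := μ) (ν := μ))
  have hmf2 : AEStronglyMeasurable (fun p : X × X => f p.2) ν :=
    hf.aestronglyMeasurable.comp_quasiMeasurePreserving
      (Measure.quasiMeasurePreserving_snd (μ := μ) (ν := μ))
  have hFsm : AEStronglyMeasurable F ν := hmf1.mul hmf2
  have hfsq : Integrable (fun x => f x ^ 2) μ :=
    (memLp_two_iff_integrable_sq hf.aestronglyMeasurable).1 hf
  have hF : MemLp F 2 ν := by
    refine (memLp_two_iff_integrable_sq hFsm).2 ?_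
    have := hfsq.mul_prod hfsq
    simpa [hFdef, mul_pow] using this
  set FL : Lp ℝ 2 ν := hF.toLp F with hFL
  set U := koopman ν S hS with hU
  set Kc := U.toContinuousLinearMap with hKc
  have hKcnorm : ‖Kc‖ ≤ 1 := U.norm_toContinuousLinearMap_le
  have hproj : ((Kc.eqLocus (1 : Lp ℝ 2 ν →L[ℝ] Lp ℝ 2 ν)).orthogonalProjectionOnto FL) = 0 := by
    apply Submodule.orthogonalProjectionOnto_apply_of_mem_orthogonal
    rw [Submodule.mem_orthogonal]
    intro u hu
    have hufix : Lp.compMeasurePreserving S hS u = u := hu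
    have huae : (⇑u) ∘ S =ᵐ[ν] ⇑u := by
      refine ((Lp.coeFn_compMeasurePreserving u hS).symm.trans ?_)
      rw [hufix]
    obtain ⟨cst, hcst⟩ := hwm.ae_eq_const_of_ae_eq_comp₀
      (Lp.aestronglyMeasurable u).aemeasurable.nullMeasurable huae
    rw [MeasureTheory.L2.inner_def]
    have : (fun p => ⟪(u : X × X → ℝ) p, (FL : X × X → ℝ) p⟫) =ᵐ[ν]
        fun p => cst * F p := by
      filter_upwards [hcst, hF.coeFn_toLp] with p h1 h2
      simp only [RCLike.inner_apply, starRingEnd_apply, star_trivial, h1, h2]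
      rw [mul_comm]
      exact congrArg (cst * ·) h2
    rw [integral_congr_ae this, integral_const_mul]
    have : ∫ p, F p ∂ν = (∫ x, f x ∂μ) * (∫ x, f x ∂μ) := integral_prod_mul f f
    rw [this, hint]
    ring
  have hmet := Kc.tendsto_birkhoffAverage_orthogonalProjection (𝕜 := ℝ) hKcnorm FL
  rw [hproj] at hmet
  have h0 : Tendsto (fun N => ⟪birkhoffAverage ℝ (⇑Kc) _root_.id N FL, FL⟫) atTop (𝓝 0) := by
    have := Filter.Tendsto.inner (𝕜 := ℝ) hmet (tendsto_const_nhds (x := FL))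
    simpa using this
  have key : ∀ n : ℕ, ⟪(⇑Kc)^[n] FL, FL⟫ = (∫ x, f (T^[n] x) * f x ∂μ) ^ 2 := by
    intro n
    have hcoe : ⇑Kc = ⇑U := by rw [hKc]; rfl
    rw [hcoe, hU, inner_koopman_toLp S hS n hF]
    have : (fun p : X × X => F (S^[n] p) * F p)
        = fun p => (f (T^[n] p.1) * f p.1) * (f (T^[n] p.2) * f p.2) := by
      funext p
      rw [hSiter]
      simp only [hFdef]
      ring
    rw [this, integral_prod_mul (fun x => f (T^[n] x) * f x) (fun x => f (T^[n] x) * f x)]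
    ring
  have heq : ∀ N : ℕ, ⟪birkhoffAverage ℝ (⇑Kc) _root_.id N FL, FL⟫
      = (N : ℝ)⁻¹ * ∑ n ∈ Finset.range N, (∫ x, f (T^[n] x) * f x ∂μ) ^ 2 := by
    intro N
    rw [birkhoffAverage, birkhoffSum, real_inner_smul_left, sum_inner]
    simp only [smul_eq_mul, _root_.id]
    congr 1
    exact Finset.sum_congr rfl fun n _ => key n
  exact h0.congr heq
lemma cesaro_abs_of_cesaro_sq {c : ℕ → ℝ}
    (h : Tendsto (fun N : ℕ => (N : ℝ)⁻¹ * ∑ n ∈ Finset.range N, (c n) ^ 2) atTop (𝓝 0)) :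
    Tendsto (fun N : ℕ => (N : ℝ)⁻¹ * ∑ n ∈ Finset.range N, |c n|) atTop (𝓝 0) := by
  have ha0 : ∀ N : ℕ, 0 ≤ (N : ℝ)⁻¹ * ∑ n ∈ Finset.range N, |c n| := by
    intro N; positivity
  have hb0 : ∀ N : ℕ, 0 ≤ (N : ℝ)⁻¹ * ∑ n ∈ Finset.range N, (c n) ^ 2 := by
    intro N; positivity
  refine squeeze_zero ha0 (g := fun N : ℕ =>
    Real.sqrt ((N : ℝ)⁻¹ * ∑ n ∈ Finset.range N, (c n) ^ 2)) (fun N => ?_) ?_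
  · rcases Nat.eq_zero_or_pos N with hN | hN
    · simp [hN]
    rw [Real.le_sqrt (ha0 N)]
    have hcs : (∑ n ∈ Finset.range N, 1 * |c n|) ^ 2
        ≤ (∑ n ∈ Finset.range N, (1 : ℝ) ^ 2) * ∑ n ∈ Finset.range N, |c n| ^ 2 :=
      Finset.sum_mul_sq_le_sq_mul_sq _ _ _
    simp only [one_mul, one_pow, Finset.sum_const, Finset.card_range, nsmul_eq_mul,
      mul_one, sq_abs] at hcs
    have hNpos : (0 : ℝ) < N := by exact_mod_cast hN
    rw [mul_pow]
    calc ((N : ℝ)⁻¹) ^ 2 * (∑ n ∈ Finset.range N, |c n|) ^ 2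
        ≤ ((N : ℝ)⁻¹) ^ 2 * ((N : ℝ) * ∑ n ∈ Finset.range N, (c n) ^ 2) := by
          apply mul_le_mul_of_nonneg_left hcs (by positivity)
      _ = (N : ℝ)⁻¹ * ∑ n ∈ Finset.range N, (c n) ^ 2 := by
          field_simp
    exact hb0 N
  · have : Tendsto Real.sqrt (𝓝 0) (𝓝 0) := by
      simpa using (Real.continuous_sqrt.tendsto 0)
    exact this.comp h
lemma Lp.coeFn_finset_sum {ι : Type*} (s : Finset ι) (F : ι → Lp ℝ 2 μ) :
    ⇑(∑ i ∈ s, F i) =ᵐ[μ] fun x => ∑ i ∈ s, (F i : α → ℝ) x := by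
  classical
  induction s using Finset.induction_on with
  | empty =>
    simp only [Finset.sum_empty]
    filter_upwards [Lp.coeFn_zero ℝ 2 μ] with x hx using hx
  | @insert a s ha ih =>
    rw [Finset.sum_insert ha]
    refine (Lp.coeFn_add _ _).trans ?_
    filter_upwards [ih] with x hx
    rw [Pi.add_apply, hx, Finset.sum_insert ha]

end

/-- **Weighted mean ergodic theorem for weakly mixing systems.** If `(X, 𝔅, μ, T)` is a
weakly mixing measure-preserving system and `f ∈ L²(X, μ)` has `∫ f dμ = 0`, then for
every `ε > 0` there exists `J₀` such that for every `J ≥ J₀` and every `{0,1}`-valued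
sequence `(b_j)`, `‖(1/J) Σ_{j=1}^J b_j · (f ∘ T^j)‖_{L²(μ)} < ε`. -/
theorem weakly_mixing_weighted_average_L2_small
    (X : Type) [MeasurableSpace X] (μ : Measure X) [IsProbabilityMeasure μ]
    (T : X → X) (hT : MeasurePreserving T μ μ)
    (hwm : Ergodic (fun p : X × X => (T p.1, T p.2)) (μ.prod μ))
    (f : X → ℝ) (hf : MemLp f 2 μ) (hint : ∫ x, f x ∂μ = 0) :
    ∀ ε : ℝ, 0 < ε → ∃ J₀ : ℕ, ∀ J : ℕ, J₀ ≤ J →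
      ∀ b : ℕ → ℝ, (∀ j, b j = 0 ∨ b j = 1) →
        eLpNorm (fun x => (1 / (J : ℝ)) * ∑ j ∈ Finset.Icc 1 J, b j * f (T^[j] x)) 2 μ
          < ENNReal.ofReal ε := by
  classical
  set c : ℕ → ℝ := fun n => ∫ x, f (T^[n] x) * f x ∂μ with hc
  have hdecay : Tendsto (fun N : ℕ => (N : ℝ)⁻¹ * ∑ n ∈ Finset.range N, |c n|) atTop (𝓝 0) :=
    cesaro_abs_of_cesaro_sq (corr_sq_cesaro μ T hT hwm f hf hint)
  intro ε hε
  have hev := hdecay.eventually_lt_const (show (0:ℝ) < ε ^ 2 / 2 by positivity)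
  rw [eventually_atTop] at hev
  obtain ⟨J₁, hJ₁⟩ := hev
  refine ⟨max J₁ 1, fun J hJ b hb => ?_⟩
  have hJ1 : 1 ≤ J := le_trans (le_max_right _ _) hJ
  have hJJ₁ : J₁ ≤ J := le_trans (le_max_left _ _) hJ
  have hJpos : (0 : ℝ) < J := by exact_mod_cast hJ1
  set U := koopman μ T hT with hU
  set fL : Lp ℝ 2 μ := hf.toLp f with hfL
  set W : ℕ → Lp ℝ 2 μ := fun j => (⇑U)^[j] fL with hW
  set H : Lp ℝ 2 μ := ∑ j ∈ Finset.Icc 1 J, b j • W j with hH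
  set G : Lp ℝ 2 μ := (1 / (J : ℝ)) • H with hG
  -- a.e. identification of the function in the statement with G
  have hterm : ∀ j : ℕ, ⇑(b j • W j) =ᵐ[μ] fun x => b j * f (T^[j] x) := by
    intro j
    filter_upwards [Lp.coeFn_smul (b j) (W j), koopman_iterate_coeFn T hT j fL,
      (hT.iterate j).quasiMeasurePreserving.ae_eq_comp hf.coeFn_toLp] with x h1 h2 h3
    rw [h1]
    have h3' : (fL : X → ℝ) (T^[j] x) = f (T^[j] x) := h3
    simp [h2, h3']
    exact Or.inl (h2.trans h3')
  have hGae : (fun x => (1 / (J : ℝ)) * ∑ j ∈ Finset.Icc 1 J, b j * f (T^[j] x))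
      =ᵐ[μ] ⇑G := by
    have hall : ∀ᵐ x ∂μ, ∀ j ∈ Finset.Icc 1 J, (b j • W j : Lp ℝ 2 μ) x
        = b j * f (T^[j] x) :=
      (ae_ball_iff (Finset.Icc 1 J).countable_toSet).2 fun j _ => hterm j
    filter_upwards [Lp.coeFn_smul (1 / (J : ℝ)) H,
      Lp.coeFn_finset_sum (Finset.Icc 1 J) (fun j => b j • W j), hall] with x h1 h2 h3
    rw [hG, h1, Pi.smul_apply, smul_eq_mul]
    congr 1
    rw [hH, h2]
    exact (Finset.sum_congr rfl fun j hj => h3 j hj).symm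
  rw [eLpNorm_congr_ae hGae]
  have : eLpNorm (⇑G) 2 μ = ENNReal.ofReal ‖G‖ := by
    rw [Lp.norm_def, ENNReal.ofReal_toReal (Lp.eLpNorm_ne_top G)]
  rw [this]
  refine (ENNReal.ofReal_lt_ofReal_iff hε).2 ?_
  -- norm-squared expansion
  have hWW : ∀ j k : ℕ, k ≤ j → ⟪W j, W k⟫ = c (j - k) := by
    intro j k hkj
    rw [hW]
    rw [koopman_inner_iterate_sub T hT hkj]
    exact inner_koopman_toLp T hT (j - k) hf
  have hWWd : ∀ j k : ℕ, ⟪W j, W k⟫ = c (j - k + (k - j)) := by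
    intro j k
    rcases le_total k j with h | h
    · rw [hWW j k h]; congr 1; omega
    · rw [real_inner_comm, hWW k j h]; congr 1; omega
  have htermbd : ∀ j k : ℕ, (b j * b k) * ⟪W j, W k⟫ ≤ |c (j - k + (k - j))| := by
    intro j k
    refine le_trans (le_abs_self _) ?_
    rw [abs_mul, abs_mul, hWWd j k]
    have hbj : |b j| ≤ 1 := by rcases hb j with h | h <;> simp [h]
    have hbk : |b k| ≤ 1 := by rcases hb k with h | h <;> simp [h]
    have h1 : |b j| * |b k| ≤ 1 := mul_le_one₀ hbj (abs_nonneg _) hbk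
    calc |b j| * |b k| * |c (j - k + (k - j))| ≤ 1 * |c (j - k + (k - j))| :=
          mul_le_mul_of_nonneg_right h1 (abs_nonneg _)
      _ = |c (j - k + (k - j))| := one_mul _
  set Sv : ℝ := ∑ n ∈ Finset.range J, |c n| with hSv
  have hSv0 : 0 ≤ Sv := Finset.sum_nonneg fun _ _ => abs_nonneg _
  have hrow : ∀ j ∈ Finset.Icc 1 J, ∑ k ∈ Finset.Icc 1 J, |c (j - k + (k - j))|
      ≤ 2 * Sv := by
    intro j hj
    rw [Finset.mem_Icc] at hj
    rw [← Finset.sum_filter_add_sum_filter_not (Finset.Icc 1 J) (fun k => k ≤ j)]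
    have h1 : ∑ k ∈ (Finset.Icc 1 J).filter (fun k => k ≤ j), |c (j - k + (k - j))|
        ≤ Sv := by
      have hre : ∑ k ∈ (Finset.Icc 1 J).filter (fun k => k ≤ j), |c (j - k + (k - j))|
          = ∑ k ∈ (Finset.Icc 1 J).filter (fun k => k ≤ j), |c (j - k)| := by
        refine Finset.sum_congr rfl fun k hk => ?_
        simp only [Finset.mem_filter, Finset.mem_Icc] at hk
        congr 2
        omega
      rw [hre]
      have hinj : ∀ x ∈ (Finset.Icc 1 J).filter (fun k => k ≤ j),
          ∀ y ∈ (Finset.Icc 1 J).filter (fun k => k ≤ j), j - x = j - y → x = y := by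
        intro x hx y hy hxy
        simp only [Finset.mem_filter, Finset.mem_Icc] at hx hy
        omega
      rw [← Finset.sum_image (g := fun k => j - k) (f := fun m => |c m|) hinj]
      refine Finset.sum_le_sum_of_subset_of_nonneg ?_ fun _ _ _ => abs_nonneg _
      intro m hm
      simp only [Finset.mem_image, Finset.mem_filter, Finset.mem_Icc] at hm
      obtain ⟨k, ⟨⟨hk1, hk2⟩, hkj⟩, rfl⟩ := hm
      rw [Finset.mem_range]
      omega
    have h2 : ∑ k ∈ (Finset.Icc 1 J).filter (fun k => ¬ k ≤ j), |c (j - k + (k - j))|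
        ≤ Sv := by
      have hre : ∑ k ∈ (Finset.Icc 1 J).filter (fun k => ¬ k ≤ j), |c (j - k + (k - j))|
          = ∑ k ∈ (Finset.Icc 1 J).filter (fun k => ¬ k ≤ j), |c (k - j)| := by
        refine Finset.sum_congr rfl fun k hk => ?_
        simp only [Finset.mem_filter, Finset.mem_Icc, not_le] at hk
        congr 2
        omega
      rw [hre]
      have hinj : ∀ x ∈ (Finset.Icc 1 J).filter (fun k => ¬ k ≤ j),
          ∀ y ∈ (Finset.Icc 1 J).filter (fun k => ¬ k ≤ j), x - j = y - j → x = y := by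
        intro x hx y hy hxy
        simp only [Finset.mem_filter, Finset.mem_Icc, not_le] at hx hy
        omega
      rw [← Finset.sum_image (g := fun k => k - j) (f := fun m => |c m|) hinj]
      refine Finset.sum_le_sum_of_subset_of_nonneg ?_ fun _ _ _ => abs_nonneg _
      intro m hm
      simp only [Finset.mem_image, Finset.mem_filter, Finset.mem_Icc, not_le] at hm
      obtain ⟨k, ⟨⟨hk1, hk2⟩, hkj⟩, rfl⟩ := hm
      rw [Finset.mem_range]
      omega
    linarith
  have hGG : ‖G‖ ^ 2 = (1 / (J : ℝ)) ^ 2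
      * ∑ j ∈ Finset.Icc 1 J, ∑ k ∈ Finset.Icc 1 J, (b j * b k) * ⟪W j, W k⟫ := by
    rw [← real_inner_self_eq_norm_sq, hG, real_inner_smul_left, real_inner_smul_right, hH,
      sum_inner]
    rw [show (1 / (J:ℝ)) * ((1 / (J:ℝ)) * ∑ j ∈ Finset.Icc 1 J, ⟪b j • W j, ∑ k ∈ Finset.Icc 1 J, b k • W k⟫)
      = (1 / (J:ℝ))^2 * ∑ j ∈ Finset.Icc 1 J, ⟪b j • W j, ∑ k ∈ Finset.Icc 1 J, b k • W k⟫ by ring]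
    congr 1
    refine Finset.sum_congr rfl fun j _ => ?_
    rw [real_inner_smul_left, inner_sum, Finset.mul_sum]
    refine Finset.sum_congr rfl fun k _ => ?_
    rw [real_inner_smul_right]
    ring
  have hsum : ∑ j ∈ Finset.Icc 1 J, ∑ k ∈ Finset.Icc 1 J, (b j * b k) * ⟪W j, W k⟫
      ≤ (J : ℝ) * (2 * Sv) := by
    calc ∑ j ∈ Finset.Icc 1 J, ∑ k ∈ Finset.Icc 1 J, (b j * b k) * ⟪W j, W k⟫
        ≤ ∑ j ∈ Finset.Icc 1 J, (2 * Sv) := by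
          refine Finset.sum_le_sum fun j hj => ?_
          exact le_trans (Finset.sum_le_sum fun k _ => htermbd j k) (hrow j hj)
      _ = (J : ℝ) * (2 * Sv) := by
          rw [Finset.sum_const, Nat.card_Icc]
          simp [nsmul_eq_mul]
  have hnormsq : ‖G‖ ^ 2 ≤ 2 * ((J : ℝ)⁻¹ * Sv) := by
    rw [hGG]
    calc (1 / (J : ℝ)) ^ 2 * ∑ j ∈ Finset.Icc 1 J, ∑ k ∈ Finset.Icc 1 J, (b j * b k) * ⟪W j, W k⟫
        ≤ (1 / (J : ℝ)) ^ 2 * ((J : ℝ) * (2 * Sv)) := by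
          refine mul_le_mul_of_nonneg_left hsum (by positivity)
      _ = 2 * ((J : ℝ)⁻¹ * Sv) := by field_simp
  have hlt : ‖G‖ ^ 2 < ε ^ 2 := by
    have := hJ₁ J hJJ₁
    calc ‖G‖ ^ 2 ≤ 2 * ((J : ℝ)⁻¹ * Sv) := hnormsq
      _ < 2 * (ε ^ 2 / 2) := by
          refine (mul_lt_mul_iff_right₀ (by norm_num)).2 ?_
          exact this
      _ = ε ^ 2 := by ring
  exact lt_of_pow_lt_pow_left₀ 2 hε.le hlt
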